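/- The vector 𝐅 of completed fifth-order mock theta functions satisfies 𝐅(z+1) = M_T 𝐅(z) for all z in the upper half-plane ℍ. -/

import Mathlib

noncomputable section

open MeasureTheory

/-- The finite q-Pochhammer symbol `(a; q)_n = ∏_{m=0}^{n-1} (1 - a q^m)`. -/
def qp (a q : ℂ) (n : ℕ) : ℂ := ∏ m ∈ Finset.range n, (1 - a * q ^ m)

/-- The infinite q-Pochhammer symbol `(a; q)_∞ = ∏_{m=0}^{∞} (1 - a q^m)`. -/
def qpInf (a q : ℂ) : ℂ := ∏' m : ℕ, (1 - a * q ^ m)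

/-- Ramanujan's fifth-order mock theta function `f₀`. -/
def mtf0 (q : ℂ) : ℂ := ∑' n : ℕ, q ^ (n ^ 2) / qp (-q) q n

/-- Ramanujan's fifth-order mock theta function `f₁`. -/
def mtf1 (q : ℂ) : ℂ := ∑' n : ℕ, q ^ (n * (n + 1)) / qp (-q) q n

/-- Ramanujan's fifth-order mock theta function `F₀`. -/
def mtF0 (q : ℂ) : ℂ := ∑' n : ℕ, q ^ (2 * n ^ 2) / qp q (q ^ 2) n

/-- Ramanujan's fifth-order mock theta function `F₁`. -/
def mtF1 (q : ℂ) : ℂ := ∑' n : ℕ, q ^ (2 * n * (n + 1)) / qp q (q ^ 2) (n + 1)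

/-- `M(a/5, q^k) = Σ_{n≥1} q^{k n(n-1)} / ((q^{ka/5}; q^k)_n (q^{k - ka/5}; q^k)_n)`
for `k` divisible by 5 (used with `a ∈ {1,2}` and `k ∈ {5,10}`). -/
def Mq (a k : ℕ) (q : ℂ) : ℂ :=
  ∑' n : ℕ, q ^ (k * (n + 1) * n) /
    (qp (q ^ (k * a / 5)) (q ^ k) (n + 1) * qp (q ^ (k - k * a / 5)) (q ^ k) (n + 1))

/-- `θ₄(0,q) = (q;q)_∞² / (q²;q²)_∞`. -/
def theta4 (q : ℂ) : ℂ := qpInf q q ^ 2 / qpInf (q ^ 2) (q ^ 2)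

/-- `ψ(q) = (q²;q²)_∞² / (q;q)_∞`. -/
def psiTheta (q : ℂ) : ℂ := qpInf (q ^ 2) (q ^ 2) ^ 2 / qpInf q q

/-- The Rogers–Ramanujan function `G(q)`. -/
def RRG (q : ℂ) : ℂ := 1 / (qpInf q (q ^ 5) * qpInf (q ^ 4) (q ^ 5))

/-- The Rogers–Ramanujan function `H(q)`. -/
def RRH (q : ℂ) : ℂ := 1 / (qpInf (q ^ 2) (q ^ 5) * qpInf (q ^ 3) (q ^ 5))

/-- `q^r = e^{2πirz}` for rational `r`. -/
def eQ (r : ℚ) (z : ℂ) : ℂ := Complex.exp (2 * Real.pi * Complex.I * (r : ℂ) * z)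

/-- `ζ_n = e^{2πi/n}`. -/
def zn (n : ℕ) : ℂ := Complex.exp (2 * Real.pi * Complex.I / (n : ℂ))

/-- The Dedekind eta function. -/
def eta (z : ℂ) : ℂ := eQ (1/24) z * ∏' n : ℕ, (1 - eQ 1 z ^ (n + 1))

/-- `g(z) = q^{-1/60} G(q)`. -/
def rrg (z : ℂ) : ℂ := eQ (-1/60) z * RRG (eQ 1 z)

/-- `h(z) = q^{11/60} H(q)`. -/
def rrh (z : ℂ) : ℂ := eQ (11/60) z * RRH (eQ 1 z)

/-- The unary theta function `g_{a,b}(z) = Σ_{ν ∈ a+ℤ} ν e^{πiν²z + 2πiνb}`. -/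
def gth (a b : ℝ) (z : ℂ) : ℂ :=
  ∑' n : ℤ, ((a : ℂ) + (n : ℂ)) *
    Complex.exp (Real.pi * Complex.I * ((a : ℂ) + (n : ℂ)) ^ 2 * z
      + 2 * Real.pi * Complex.I * ((a : ℂ) + (n : ℂ)) * (b : ℂ))

/-- The nonholomorphic integral
`R_{a,b}(z) = -i ∫_{-z̄}^{i∞} g_{a,-b}(τ) (-i(τ+z))^{-1/2} dτ`,
parametrized along the vertical ray `τ = -z̄ + it`, `t ∈ (0,∞)`. -/
def RInt (a b : ℝ) (z : ℂ) : ℂ :=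
  -Complex.I * ∫ t in Set.Ioi (0 : ℝ),
    (gth a (-b) (-(starRingEnd ℂ z) + t * Complex.I) /
      (-Complex.I * ((-(starRingEnd ℂ z) + t * Complex.I) + z)) ^ ((1 : ℂ)/2)) * Complex.I

/-- `M(a/5, z) = Σ_{n≥1} q^{n(n-1)} / ((q^{a/5};q)_n (q^{1-a/5};q)_n)` with `q = e^{2πiz}`. -/
def Mm (a : ℕ) (z : ℂ) : ℂ :=
  ∑' n : ℕ, eQ 1 z ^ ((n + 1) * n) /
    (qp (eQ ((a : ℚ)/5) z) (eQ 1 z) (n + 1) * qp (eQ (1 - (a : ℚ)/5) z) (eQ 1 z) (n + 1))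

/-- `N(a/5, z) = 1 + Σ_{n≥1} q^{n²} / ((ζ₅^a q;q)_n (ζ₅^{-a} q;q)_n)` with `q = e^{2πiz}`. -/
def Nn (a : ℕ) (z : ℂ) : ℂ :=
  1 + ∑' n : ℕ, eQ 1 z ^ ((n + 1) ^ 2) /
    (qp (zn 5 ^ a * eQ 1 z) (eQ 1 z) (n + 1) * qp ((zn 5)⁻¹ ^ a * eQ 1 z) (eQ 1 z) (n + 1))

/-- The completed Appell–Lerch sum `M̃(a/5, z)`. -/
def Mtilde (a : ℕ) (z : ℂ) : ℂ :=
  2 * eQ (3 * (a : ℚ) / 10 * (1 - (a : ℚ)/5) - 1/24) z * Mm a z +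
    zn 10 ^ a * ((zn 12)⁻¹ * RInt ((6 * (a : ℝ) - 5)/30) (1/2) (3 * z)
      + zn 12 * RInt ((6 * (a : ℝ) + 5)/30) (1/2) (3 * z))

/-- The completed mock theta function `f̃₀`. -/
def ftilde0 (z : ℂ) : ℂ :=
  eQ (-1/60) z * mtf0 (eQ 1 z) -
    zn 10 * ((zn 12)⁻¹ * RInt (1/30) (1/2) (30 * z) + zn 12 * RInt (11/30) (1/2) (30 * z))

/-- The completed mock theta function `f̃₁`. -/
def ftilde1 (z : ℂ) : ℂ :=
  eQ (11/60) z * mtf1 (eQ 1 z) -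
    zn 5 * ((zn 12)⁻¹ * RInt (7/30) (1/2) (30 * z) + zn 12 * RInt (17/30) (1/2) (30 * z))

/-- The completed mock theta function `F̃₀`. -/
def Ftilde0 (z : ℂ) : ℂ :=
  eQ (-1/120) z * (mtF0 (eQ 1 z) - 1) +
    (1/2) * zn 10 * ((zn 12)⁻¹ * RInt (1/30) (1/2) (15 * z) + zn 12 * RInt (11/30) (1/2) (15 * z))

/-- The completed mock theta function `F̃₁`. -/
def Ftilde1 (z : ℂ) : ℂ :=
  eQ (71/120) z * mtF1 (eQ 1 z) +
    (1/2) * zn 5 * ((zn 12)⁻¹ * RInt (7/30) (1/2) (15 * z) + zn 12 * RInt (17/30) (1/2) (15 * z))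

/-- `α = √((5-√5)/2)` (as a complex number). -/
def alphaC : ℂ := (Real.sqrt ((5 - Real.sqrt 5)/2) : ℝ)

/-- `β = √((5+√5)/2)` (as a complex number). -/
def betaC : ℂ := (Real.sqrt ((5 + Real.sqrt 5)/2) : ℝ)

/-- The vector `𝐅` of completed fifth-order mock theta functions. -/
def Fvec (z : ℂ) : Fin 6 → ℂ :=
  ![ftilde0 z, ftilde1 z, Ftilde0 (z/2), Ftilde1 (z/2),
    zn 240 * Ftilde0 ((z + 1)/2), zn 240 ^ (-71 : ℤ) * Ftilde1 ((z + 1)/2)]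

/-- The vector `𝐆` built from completed Appell–Lerch sums and eta-quotient multiples of the
Rogers–Ramanujan functions. -/
def Gvec (z : ℂ) : Fin 6 → ℂ :=
  ![-(Mtilde 1 (10 * z)) + eta (5 * z) ^ 2 / eta (10 * z) * rrg z,
    -(Mtilde 2 (10 * z)) + eta (5 * z) ^ 2 / eta (10 * z) * rrh z,
    (1/2) * Mtilde 1 (5 * z / 2) - eta (5 * z) ^ 2 / eta (5 * z / 2) * rrh z,
    (1/2) * Mtilde 2 (5 * z / 2) + eta (5 * z) ^ 2 / eta (5 * z / 2) * rrg z,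
    (1/2) * zn 240 * Mtilde 1 ((5 * z + 5)/2)
      - zn 48 ^ 25 * (eta (5 * z) ^ 2 / eta ((5 * z + 1)/2)) * rrh z,
    (1/2) * zn 240 ^ (-71 : ℤ) * Mtilde 2 ((5 * z + 5)/2)
      + zn 48 * (eta (5 * z) ^ 2 / eta ((5 * z + 1)/2)) * rrg z]

/-- The matrix `M_T`. -/
def MT : Matrix (Fin 6) (Fin 6) ℂ :=
  !![(zn 60)⁻¹, 0, 0, 0, 0, 0;
     0, zn 60 ^ 11, 0, 0, 0, 0;
     0, 0, 0, 0, (zn 240)⁻¹, 0;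
     0, 0, 0, 0, 0, zn 240 ^ 71;
     0, 0, (zn 240)⁻¹, 0, 0, 0;
     0, 0, 0, zn 240 ^ 71, 0, 0]

/-- The matrix `M_S`. -/
def MS : Matrix (Fin 6) (Fin 6) ℂ :=
  !![0, 0, alphaC, betaC, 0, 0;
     0, 0, betaC, -alphaC, 0, 0;
     alphaC/2, betaC/2, 0, 0, 0, 0;
     betaC/2, -alphaC/2, 0, 0, 0, 0;
     0, 0, 0, 0, betaC/(Real.sqrt 2 : ℂ), alphaC/(Real.sqrt 2 : ℂ);
     0, 0, 0, 0, alphaC/(Real.sqrt 2 : ℂ), -betaC/(Real.sqrt 2 : ℂ)]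

/-- The generalized eta function `η_{10,1}(z) = q^{23/60} ∏_{n≥1, n≡±1 (10)} (1-qⁿ)`. -/
def etaTen1 (z : ℂ) : ℂ :=
  eQ (23/60) z * ∏' n : ℕ, ((1 - eQ 1 z ^ (10 * n + 1)) * (1 - eQ 1 z ^ (10 * n + 9)))

/-- The generalized eta function `η_{10,3}(z) = q^{-13/60} ∏_{n≥1, n≡±3 (10)} (1-qⁿ)`. -/
def etaTen3 (z : ℂ) : ℂ :=
  eQ (-13/60) z * ∏' n : ℕ, ((1 - eQ 1 z ^ (10 * n + 3)) * (1 - eQ 1 z ^ (10 * n + 7)))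

/-- The right-hand side `R(z)` of Lemma 2. -/
def Rfun (z : ℂ) : ℂ :=
  2 * (eta (2 * z) ^ 2 / eta z) * (alphaC⁻¹ * rrg (10 * z) + betaC⁻¹ * rrh (10 * z)) -
    2 * (eta (50 * z) ^ 2 / eta (25 * z)) * (betaC * rrg (10 * z) - alphaC * rrh (10 * z))

/-- The sign `a_h`. -/
def ah (h : ℕ) : ℂ := if h < 30 then 1 else -1

/-- The sign `b_h`. -/
def bh (h : ℕ) : ℂ :=
  if h % 60 = 1 ∨ h % 60 = 13 ∨ h % 60 = 47 ∨ h % 60 = 59 then 1 else -1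

/-- The coefficient of `𝔢_h - 𝔢_{-h}` (for `0 < h < 60`) in the vector `𝓗`. -/
def coeffH (H : ℂ → Fin 6 → ℂ) (z : ℂ) (h : ℕ) : ℂ :=
  if (h % 10 = 1 ∨ h % 10 = 9) ∧ Nat.gcd h 60 = 1 then ah h * H z 2 + bh h * H z 4
  else if (h % 10 = 2 ∨ h % 10 = 8) ∧ Nat.gcd h 60 = 2 then -(H z 0)
  else if (h % 10 = 3 ∨ h % 10 = 7) ∧ Nat.gcd h 60 = 1 then ah h * H z 3 + bh h * H z 5
  else if (h % 10 = 4 ∨ h % 10 = 6) ∧ Nat.gcd h 60 = 2 then -(H z 1)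
  else 0

/-- The `𝔢_k`-component of the vector-valued function `𝓗` built from `H`. -/
def calH (H : ℂ → Fin 6 → ℂ) (z : ℂ) (k : ZMod 120) : ℂ :=
  ∑ h ∈ Finset.Ioo 0 60, coeffH H z h *
    ((if ((h : ℕ) : ZMod 120) = k then 1 else 0) - (if -((h : ℕ) : ZMod 120) = k then 1 else 0))

lemma gth_shift (m k : ℤ) (hm : Odd m) (a b : ℝ) (ha : a = (m : ℝ)/30) (z : ℂ) :
    gth a b (z + 15 * (k : ℂ)) =
      Complex.exp (Real.pi * Complex.I * (a : ℂ)^2 * (15 * (k : ℂ))) * gth a b z := by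
  have haC : (a : ℂ) = (m : ℂ)/30 := by rw [ha]; push_cast; ring
  rw [gth, gth, ← tsum_mul_left]
  refine tsum_congr fun n => ?_
  have he : Even (k * n * (m + 15 * n)) := by
    rcases Int.even_or_odd n with hn | hn
    · exact ((hn.mul_left k).mul_right _)
    · exact ((hm.add_odd ((by decide : Odd (15:ℤ)).mul hn)).mul_left _)
  obtain ⟨j, hj⟩ := he
  have hjC : (k : ℂ) * n * (m + 15 * n) = j + j := by exact_mod_cast congrArg (Int.cast : ℤ → ℂ) hj
  have hexp : Complex.exp ((Real.pi : ℂ) * Complex.I * ((a : ℂ) + (n : ℂ)) ^ 2 * (z + 15 * (k : ℂ))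
        + 2 * (Real.pi : ℂ) * Complex.I * ((a : ℂ) + (n : ℂ)) * (b : ℂ))
      = Complex.exp ((Real.pi : ℂ) * Complex.I * (a : ℂ) ^ 2 * (15 * (k : ℂ))) *
        Complex.exp ((Real.pi : ℂ) * Complex.I * ((a : ℂ) + (n : ℂ)) ^ 2 * z
          + 2 * (Real.pi : ℂ) * Complex.I * ((a : ℂ) + (n : ℂ)) * (b : ℂ)) := by
    rw [← Complex.exp_add, Complex.exp_eq_exp_iff_exists_int]
    refine ⟨j, ?_⟩
    rw [haC]
    linear_combination ((Real.pi : ℂ) * Complex.I) * hjC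
  rw [hexp]
  ring

lemma RInt_shift (m k : ℤ) (hm : Odd m) (a b : ℝ) (ha : a = (m : ℝ)/30) (z : ℂ) :
    RInt a b (z + 15 * (k : ℂ)) =
      Complex.exp (-(Real.pi * Complex.I * (a : ℂ)^2 * (15 * (k : ℂ)))) * RInt a b z := by
  rw [RInt, RInt]
  have key : ∀ t : ℝ,
      (gth a (-b) (-(starRingEnd ℂ (z + 15 * (k : ℂ))) + t * Complex.I) /
        (-Complex.I * ((-(starRingEnd ℂ (z + 15 * (k : ℂ))) + t * Complex.I) +
          (z + 15 * (k : ℂ)))) ^ ((1 : ℂ)/2)) * Complex.I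
      = Complex.exp (-(Real.pi * Complex.I * (a : ℂ)^2 * (15 * (k : ℂ)))) *
        ((gth a (-b) (-(starRingEnd ℂ z) + t * Complex.I) /
          (-Complex.I * ((-(starRingEnd ℂ z) + t * Complex.I) + z)) ^ ((1 : ℂ)/2)) *
            Complex.I) := by
    intro t
    have hconj : starRingEnd ℂ (z + 15 * (k : ℂ)) = starRingEnd ℂ z + 15 * (k : ℂ) := by
      simp [map_add, map_mul, map_intCast, Complex.conj_ofNat]
    rw [hconj]
    have harg : -(starRingEnd ℂ z + 15 * (k : ℂ)) + t * Complex.I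
        = (-(starRingEnd ℂ z) + t * Complex.I) + 15 * ((-k : ℤ) : ℂ) := by push_cast; ring
    rw [harg, gth_shift m (-k) hm a (-b) ha]
    have hden : ((-(starRingEnd ℂ z) + t * Complex.I) + 15 * ((-k : ℤ) : ℂ)) +
        (z + 15 * (k : ℂ)) = (-(starRingEnd ℂ z) + t * Complex.I) + z := by push_cast; ring
    rw [hden]
    have hE : Complex.exp (Real.pi * Complex.I * (a : ℂ)^2 * (15 * ((-k : ℤ) : ℂ)))
        = Complex.exp (-(Real.pi * Complex.I * (a : ℂ)^2 * (15 * (k : ℂ)))) := by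
      congr 1; push_cast; ring
    rw [hE]
    ring
  simp only [key]
  rw [MeasureTheory.integral_const_mul]
  ring

lemma eQ_add_one (r : ℚ) (z : ℂ) :
    eQ r (z + 1) = Complex.exp (2 * Real.pi * Complex.I * (r : ℂ)) * eQ r z := by
  rw [eQ, eQ, ← Complex.exp_add]
  congr 1
  ring

lemma eQ_one_add_one (z : ℂ) : eQ 1 (z + 1) = eQ 1 z := by
  rw [eQ_add_one]
  norm_num [Complex.exp_two_pi_mul_I]

lemma ftilde0_T (z : ℂ) : ftilde0 (z + 1) = (zn 60)⁻¹ * ftilde0 z := by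
  rw [ftilde0, ftilde0, eQ_add_one, eQ_one_add_one]
  have h1 : (30:ℂ) * (z + 1) = 30 * z + 15 * ((2:ℤ) : ℂ) := by push_cast; ring
  rw [h1, RInt_shift 1 2 ⟨0, by ring⟩ (1/30) (1/2) (by push_cast; ring),
    RInt_shift 11 2 ⟨5, by ring⟩ (11/30) (1/2) (by push_cast; ring)]
  have e0 : Complex.exp (2 * Real.pi * Complex.I * (((-1/60 : ℚ)) : ℂ)) = (zn 60)⁻¹ := by
    rw [zn, ← Complex.exp_neg, Complex.exp_eq_exp_iff_exists_int]
    exact ⟨0, by push_cast; ring⟩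
  have e1 : Complex.exp (-(Real.pi * Complex.I * (((1/30 : ℝ)) : ℂ)^2 * (15 * ((2:ℤ) : ℂ))))
      = (zn 60)⁻¹ := by
    rw [zn, ← Complex.exp_neg, Complex.exp_eq_exp_iff_exists_int]
    exact ⟨0, by push_cast; ring⟩
  have e2 : Complex.exp (-(Real.pi * Complex.I * (((11/30 : ℝ)) : ℂ)^2 * (15 * ((2:ℤ) : ℂ))))
      = (zn 60)⁻¹ := by
    rw [zn, ← Complex.exp_neg, Complex.exp_eq_exp_iff_exists_int]
    exact ⟨-2, by push_cast; ring⟩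
  rw [e0, e1, e2]
  ring

lemma ftilde1_T (z : ℂ) : ftilde1 (z + 1) = zn 60 ^ 11 * ftilde1 z := by
  rw [ftilde1, ftilde1, eQ_add_one, eQ_one_add_one]
  have h1 : (30:ℂ) * (z + 1) = 30 * z + 15 * ((2:ℤ) : ℂ) := by push_cast; ring
  rw [h1, RInt_shift 7 2 ⟨3, by ring⟩ (7/30) (1/2) (by push_cast; ring),
    RInt_shift 17 2 ⟨8, by ring⟩ (17/30) (1/2) (by push_cast; ring)]
  have e0 : Complex.exp (2 * Real.pi * Complex.I * (((11/60 : ℚ)) : ℂ)) = zn 60 ^ 11 := by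
    rw [zn, ← Complex.exp_nat_mul, Complex.exp_eq_exp_iff_exists_int]
    exact ⟨0, by push_cast; ring⟩
  have e1 : Complex.exp (-(Real.pi * Complex.I * (((7/30 : ℝ)) : ℂ)^2 * (15 * ((2:ℤ) : ℂ))))
      = zn 60 ^ 11 := by
    rw [zn, ← Complex.exp_nat_mul, Complex.exp_eq_exp_iff_exists_int]
    exact ⟨-1, by push_cast; ring⟩
  have e2 : Complex.exp (-(Real.pi * Complex.I * (((17/30 : ℝ)) : ℂ)^2 * (15 * ((2:ℤ) : ℂ))))
      = zn 60 ^ 11 := by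
    rw [zn, ← Complex.exp_nat_mul, Complex.exp_eq_exp_iff_exists_int]
    exact ⟨-5, by push_cast; ring⟩
  rw [e0, e1, e2]
  ring

lemma Ftilde0_T (z : ℂ) : Ftilde0 (z + 1) = (zn 120)⁻¹ * Ftilde0 z := by
  rw [Ftilde0, Ftilde0, eQ_add_one, eQ_one_add_one]
  have h1 : (15:ℂ) * (z + 1) = 15 * z + 15 * ((1:ℤ) : ℂ) := by push_cast; ring
  rw [h1, RInt_shift 1 1 ⟨0, by ring⟩ (1/30) (1/2) (by push_cast; ring),
    RInt_shift 11 1 ⟨5, by ring⟩ (11/30) (1/2) (by push_cast; ring)]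
  have e0 : Complex.exp (2 * Real.pi * Complex.I * (((-1/120 : ℚ)) : ℂ)) = (zn 120)⁻¹ := by
    rw [zn, ← Complex.exp_neg, Complex.exp_eq_exp_iff_exists_int]
    exact ⟨0, by push_cast; ring⟩
  have e1 : Complex.exp (-(Real.pi * Complex.I * (((1/30 : ℝ)) : ℂ)^2 * (15 * ((1:ℤ) : ℂ))))
      = (zn 120)⁻¹ := by
    rw [zn, ← Complex.exp_neg, Complex.exp_eq_exp_iff_exists_int]
    exact ⟨0, by push_cast; ring⟩
  have e2 : Complex.exp (-(Real.pi * Complex.I * (((11/30 : ℝ)) : ℂ)^2 * (15 * ((1:ℤ) : ℂ))))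
      = (zn 120)⁻¹ := by
    rw [zn, ← Complex.exp_neg, Complex.exp_eq_exp_iff_exists_int]
    exact ⟨-1, by push_cast; ring⟩
  rw [e0, e1, e2]
  ring

lemma Ftilde1_T (z : ℂ) : Ftilde1 (z + 1) = zn 120 ^ 71 * Ftilde1 z := by
  rw [Ftilde1, Ftilde1, eQ_add_one, eQ_one_add_one]
  have h1 : (15:ℂ) * (z + 1) = 15 * z + 15 * ((1:ℤ) : ℂ) := by push_cast; ring
  rw [h1, RInt_shift 7 1 ⟨3, by ring⟩ (7/30) (1/2) (by push_cast; ring),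
    RInt_shift 17 1 ⟨8, by ring⟩ (17/30) (1/2) (by push_cast; ring)]
  have e0 : Complex.exp (2 * Real.pi * Complex.I * (((71/120 : ℚ)) : ℂ)) = zn 120 ^ 71 := by
    rw [zn, ← Complex.exp_nat_mul, Complex.exp_eq_exp_iff_exists_int]
    exact ⟨0, by push_cast; ring⟩
  have e1 : Complex.exp (-(Real.pi * Complex.I * (((7/30 : ℝ)) : ℂ)^2 * (15 * ((1:ℤ) : ℂ))))
      = zn 120 ^ 71 := by
    rw [zn, ← Complex.exp_nat_mul, Complex.exp_eq_exp_iff_exists_int]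
    exact ⟨-1, by push_cast; ring⟩
  have e2 : Complex.exp (-(Real.pi * Complex.I * (((17/30 : ℝ)) : ℂ)^2 * (15 * ((1:ℤ) : ℂ))))
      = zn 120 ^ 71 := by
    rw [zn, ← Complex.exp_nat_mul, Complex.exp_eq_exp_iff_exists_int]
    exact ⟨-3, by push_cast; ring⟩
  rw [e0, e1, e2]
  ring

lemma zn240_sq : zn 240 ^ 2 = zn 120 := by
  rw [zn, zn, ← Complex.exp_nat_mul]
  congr 1
  push_cast
  ring

@[simp]
lemma cons_val_five' {α : Type*} {m : ℕ} (x : α) (u : Fin m.succ.succ.succ.succ.succ → α) :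
    Matrix.vecCons x u 5 =
      Matrix.vecHead (Matrix.vecTail (Matrix.vecTail (Matrix.vecTail (Matrix.vecTail u)))) :=
  rfl

theorem stmt8 : ∀ z : ℂ, 0 < z.im → Fvec (z + 1) = MT.mulVec (Fvec z) := by
  intro z _
  have hz : zn 240 ≠ 0 := Complex.exp_ne_zero _
  funext i
  fin_cases i <;>
    simp [Fvec, MT, Matrix.mulVec, dotProduct, Fin.sum_univ_six]
  · exact ftilde0_T z
  · exact ftilde1_T z
  · rw [← mul_assoc, inv_mul_cancel₀ hz, one_mul]
  · rw [← zpow_natCast (zn 240) 71, ← zpow_neg, ← mul_assoc, ← zpow_add₀ hz]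
    norm_num
  · rw [show (z + 1 + 1)/2 = z/2 + 1 from by ring, Ftilde0_T, ← zn240_sq]
    field_simp
  · rw [show (z + 1 + 1)/2 = z/2 + 1 from by ring, Ftilde1_T, ← zn240_sq,
      show (zn 240 ^ 2) ^ 71 = zn 240 ^ 142 from by ring,
      ← zpow_natCast (zn 240) 142, ← zpow_natCast (zn 240) 71, ← zpow_neg,
      ← mul_assoc, ← zpow_add₀ hz]
    norm_num
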